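/- Let $X$ be a real Hilbert space and $J : X \to \mathbb{R}$ a $C^1$ functional whose derivative is Lipschitz with constant $L > 0$. Let $x_0 \in X$ with $J'(x_0) \ne 0$, and let $M$ be the set of global minima of the functional $x \mapsto \tfrac{1}{2}\|x - x_0\|^2 - \tfrac{1}{L} J(x)$. Then every $z \in M$ satisfies $J(z) > J(x_0)$. -/

import Mathlib

open scoped NNReal ENNReal

open Filter

theorem stmt8 {X : Type*} [NormedAddCommGroup X] [InnerProductSpace ℝ X] [CompleteSpace X]
    (J : X → ℝ) (J' : X → X)
    (hgrad : ∀ x : X, HasGradientAt J (J' x) x) (hcont : Continuous J')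
    (hsw : ∀ (u : ℕ → X) (y : X),
      Tendsto (fun n => toWeakSpace ℝ X (u n)) atTop (nhds (toWeakSpace ℝ X y)) →
        limsup (fun n => J (u n)) atTop ≤ J y)
    (L : ℝ≥0) (hL : 0 < (L : ℝ)) (hLip : LipschitzWith L J')
    (x₀ : X) (hx₀ : J' x₀ ≠ 0) :
    ∀ z : X,
      (∀ x : X, (1 / 2 : ℝ) * ‖z - x₀‖ ^ 2 - (1 / L) * J z ≤
        (1 / 2 : ℝ) * ‖x - x₀‖ ^ 2 - (1 / L) * J x) →
      J x₀ < J z := by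
  intro z hz
  by_contra hle
  push_neg at hle
  have hLinv : (0:ℝ) < 1 / (L : ℝ) := by positivity
  -- Step 1: z = x₀
  have key := hz x₀
  simp only [sub_self, norm_zero] at key
  have hzx : z = x₀ := by
    have h0 : 1/(L:ℝ) * J z ≤ 1/(L:ℝ) * J x₀ := mul_le_mul_of_nonneg_left hle hLinv.le
    have h1 : ‖z - x₀‖ ^ 2 ≤ 0 := by nlinarith
    have h2 : ‖z - x₀‖ ^ 2 = 0 := le_antisymm h1 (sq_nonneg _)
    have h3 : ‖z - x₀‖ = 0 := by
      exact (pow_eq_zero_iff two_ne_zero).mp h2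
    exact sub_eq_zero.mp (norm_eq_zero.mp h3)
  subst hzx
  set v := J' z with hv
  have hvpos : (0:ℝ) < ‖v‖ ^ 2 := pow_pos (norm_pos_iff.mpr hx₀) 2
  -- Step 2: F t ≤ 0
  set F : ℝ → ℝ := fun t => J (z + t • v) - J z - (L / 2) * ‖v‖ ^ 2 * t ^ 2 with hF
  have hFle : ∀ t : ℝ, F t ≤ 0 := by
    intro t
    have h2 := hz (z + t • v)
    simp only [sub_self, norm_zero, add_sub_cancel_left, norm_smul, Real.norm_eq_abs,
      mul_pow, sq_abs] at h2
    have h3 : (J (z + t • v) - J z) / (L:ℝ) ≤ 1/2 * (t ^ 2 * ‖v‖ ^ 2) := by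
      have h4 : 1/(L:ℝ) * J (z + t • v) - 1/(L:ℝ) * J z ≤ 1/2 * (t ^ 2 * ‖v‖ ^ 2) := by
        linarith
      calc (J (z + t • v) - J z) / (L:ℝ)
          = 1/(L:ℝ) * J (z + t • v) - 1/(L:ℝ) * J z := by ring
        _ ≤ _ := h4
    have h5 := (div_le_iff₀ hL).mp h3
    simp only [hF]
    nlinarith
  -- Step 3: F has derivative ‖v‖^2 at 0
  have hline : HasDerivAt (fun t : ℝ => z + t • v) v 0 := by
    simpa using ((hasDerivAt_id (0:ℝ)).smul_const v).const_add z
  have hJd : HasDerivAt (fun t : ℝ => J (z + t • v)) (‖v‖ ^ 2) 0 := by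
    have h1 : HasFDerivAt J (InnerProductSpace.toDual ℝ X v) (z + (0:ℝ) • v) := by
      simpa using (hgrad z).hasFDerivAt
    have h2 := h1.comp_hasDerivAt 0 hline
    simp [real_inner_self_eq_norm_sq] at h2
    exact h2
  have hquad : HasDerivAt (fun t : ℝ => ((L:ℝ) / 2) * ‖v‖ ^ 2 * t ^ 2) 0 0 := by
    simpa using ((hasDerivAt_pow 2 (0:ℝ)).const_mul (((L:ℝ) / 2) * ‖v‖ ^ 2))
  have hFd : HasDerivAt F (‖v‖ ^ 2) 0 := by
    have h := (hJd.sub_const (J z)).sub hquad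
    simp only [sub_zero] at h
    exact h
  -- Step 4: slope argument
  have hslope := hasDerivAt_iff_tendsto_slope.mp hFd
  have htend : Tendsto (slope F 0) (nhdsWithin 0 (Set.Ioi 0)) (nhds (‖v‖ ^ 2)) :=
    hslope.mono_left (nhdsWithin_mono 0 (fun t ht => ne_of_gt ht))
  have hle0 : ‖v‖ ^ 2 ≤ 0 := by
    refine le_of_tendsto htend ?_
    filter_upwards [self_mem_nhdsWithin] with t ht
    have hF0 : F 0 = 0 := by simp [hF]
    rw [slope_def_field, hF0, sub_zero, sub_zero]
    exact div_nonpos_of_nonpos_of_nonneg (hFle t) ht.le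
  linarith
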